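/- Let ρ > 0, d > 0, a > 0 be real and let L ≥ 2 be an integer. Then there exists exactly one pair (δ, δ̃) of positive real numbers satisfying the system of fixed-point equations δ = (1/L)·d/(ρ⁻¹(1+δ̃d) + a/(L(1+δ))) and δ̃ = (1/L)·1/(ρ⁻¹(1+δ) + a/(L(1+δ̃d))) + ((L−1)/L)·ρ/(1+δ). -/

import Mathlib

/-- The single-variable cubic whose unique positive root parameterizes the
fixed point: `P(x) = (K-1)·d·ρ·x·(1+x) + K·x·(1+x)² + a·ρ·x − d·ρ·(1+x)`. -/
private def fpPoly (ρ d a K x : ℝ) : ℝ :=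
  (K - 1) * d * ρ * x * (1 + x) + K * x * (1 + x) ^ 2 + a * ρ * x - d * ρ * (1 + x)

private lemma fp_equiv (ρ d a K : ℝ) (hρ : 0 < ρ) (hd : 0 < d) (ha : 0 < a) (hK2 : 2 ≤ K)
    (x y : ℝ) (hx : 0 < x) (hy : 0 < y) :
    (x = 1 / K * d / (ρ⁻¹ * (1 + y * d) + a / (K * (1 + x))) ∧
     y = 1 / K * (1 / (ρ⁻¹ * (1 + x) + a / (K * (1 + y * d)))) + (K - 1) / K * ρ / (1 + x))
    ↔ (fpPoly ρ d a K x = 0 ∧ y = ρ * (K - 1) / K + x / d) := by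
  have hK : (0:ℝ) < K := by linarith
  have h1x : (0:ℝ) < 1 + x := by linarith
  have hu : (0:ℝ) < 1 + y * d := by positivity
  have hD1 : (0:ℝ) < ρ⁻¹ * (1 + y * d) + a / (K * (1 + x)) := by positivity
  have hD2 : (0:ℝ) < ρ⁻¹ * (1 + x) + a / (K * (1 + y * d)) := by positivity
  constructor
  · rintro ⟨e1, e2⟩
    rw [eq_div_iff hD1.ne'] at e1
    have P1 : x * (K * (1 + x) * (1 + y * d) + a * ρ) = d * ρ * (1 + x) := by
      field_simp at e1
      refine mul_left_cancel₀ hK.ne' ?_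
      linear_combination K * e1
    have P2 : y * K * (1 + x) * (K * (1 + x) * (1 + y * d) + a * ρ) =
        ρ * (1 + y * d) * K * (1 + x) + (K - 1) * ρ * (K * (1 + x) * (1 + y * d) + a * ρ) := by
      field_simp at e2
      refine mul_left_cancel₀ hK.ne' ?_
      linear_combination K * e2
    have hpx : fpPoly ρ d a K x = 0 := by
      have h2 : ρ * fpPoly ρ d a K x = ρ * 0 := by
        unfold fpPoly
        linear_combination (ρ * (1 + x) + x * (y * K * (1 + x) - K * ρ)) * P1 - x ^ 2 * P2
      exact mul_left_cancel₀ hρ.ne' h2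
    refine ⟨hpx, ?_⟩
    have hne : d * K * x * (1 + x) ≠ 0 := by positivity
    have h3 : y * (K * d) * (x * (1 + x)) = (ρ * (K - 1) * d + x * K) * (x * (1 + x)) := by
      unfold fpPoly at hpx
      linear_combination P1 - hpx
    have h4 : y * (K * d) = ρ * (K - 1) * d + x * K :=
      mul_right_cancel₀ (by positivity) h3
    rw [div_add_div _ _ hK.ne' hd.ne', eq_div_iff (by positivity : K * d ≠ 0)]
    linear_combination h4
  · rintro ⟨hpx, hyv⟩
    have P1 : x * (K * (1 + x) * (1 + y * d) + a * ρ) = d * ρ * (1 + x) := by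
      rw [hyv]
      unfold fpPoly at hpx
      field_simp
      linear_combination hpx
    constructor
    · rw [eq_div_iff hD1.ne']
      field_simp
      linear_combination P1
    · have P2 : y * K * (1 + x) * (K * (1 + x) * (1 + y * d) + a * ρ) =
          ρ * (1 + y * d) * K * (1 + x) + (K - 1) * ρ * (K * (1 + x) * (1 + y * d) + a * ρ) := by
        have h2 : x ^ 2 * (y * K * (1 + x) * (K * (1 + x) * (1 + y * d) + a * ρ)) =
            x ^ 2 * (ρ * (1 + y * d) * K * (1 + x) + (K - 1) * ρ * (K * (1 + x) * (1 + y * d) + a * ρ)) := by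
          unfold fpPoly at hpx
          linear_combination (ρ * (1 + x) + x * (y * K * (1 + x) - K * ρ)) * P1 - ρ * hpx
        exact mul_left_cancel₀ (by positivity) h2
      field_simp
      linear_combination P2

/-- For real parameters `ρ, d, a > 0` and an integer `L ≥ 2`, the
two-variable fixed-point system (equation (10) of the paper) admits exactly one
positive solution `(δ, δ̃)`. -/
theorem unique_positive_fixed_point (ρ d a : ℝ) (hρ : 0 < ρ) (hd : 0 < d) (ha : 0 < a)
    (L : ℕ) (hL : 2 ≤ L) :
    ∃! p : ℝ × ℝ, (0 < p.1 ∧ 0 < p.2) ∧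
      p.1 = (1 / (L : ℝ)) * d / (ρ⁻¹ * (1 + p.2 * d) + a / ((L : ℝ) * (1 + p.1))) ∧
      p.2 = (1 / (L : ℝ)) * (1 / (ρ⁻¹ * (1 + p.1) + a / ((L : ℝ) * (1 + p.2 * d))))
              + (((L : ℝ) - 1) / (L : ℝ)) * ρ / (1 + p.1) := by
  have hK2 : (2:ℝ) ≤ (L : ℝ) := by exact_mod_cast hL
  have hK : (0:ℝ) < (L : ℝ) := by linarith
  -- strict monotonicity of the cubic on [0, ∞)
  have hmono : StrictMonoOn (fun x => fpPoly ρ d a (L : ℝ) x) (Set.Ici 0) := by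
    intro u hu v hv huv
    simp only [Set.mem_Ici] at hu hv
    have e : fpPoly ρ d a (L:ℝ) v - fpPoly ρ d a (L:ℝ) u =
        d * ρ * ((v - u) * (((L:ℝ) - 1) * (1 + u + v) - 1)) +
        (L:ℝ) * ((v - u) * (1 + 2 * (u + v) + u ^ 2 + u * v + v ^ 2)) + a * ρ * (v - u) := by
      unfold fpPoly; ring
    have h1 : (0:ℝ) ≤ d * ρ * ((v - u) * (((L:ℝ) - 1) * (1 + u + v) - 1)) := by
      have hf : (0:ℝ) ≤ ((L:ℝ) - 1) * (1 + u + v) - 1 := by nlinarith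
      have hvu : (0:ℝ) ≤ v - u := by linarith
      exact mul_nonneg (mul_nonneg hd.le hρ.le) (mul_nonneg hvu hf)
    have h2 : (0:ℝ) ≤ (L:ℝ) * ((v - u) * (1 + 2 * (u + v) + u ^ 2 + u * v + v ^ 2)) := by
      have hvu : (0:ℝ) ≤ v - u := by linarith
      have hq : (0:ℝ) ≤ 1 + 2 * (u + v) + u ^ 2 + u * v + v ^ 2 := by nlinarith
      exact mul_nonneg hK.le (mul_nonneg hvu hq)
    have h3 : (0:ℝ) < a * ρ * (v - u) := by
      have hvu : (0:ℝ) < v - u := by linarith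
      exact mul_pos (mul_pos ha hρ) hvu
    simp only
    linarith
  -- existence of a positive root of the cubic
  obtain ⟨x₀, hx₀mem, hx₀⟩ : ∃ x ∈ Set.Ioo (0:ℝ) (d / a), fpPoly ρ d a (L:ℝ) x = 0 := by
    have hda : (0:ℝ) < d / a := div_pos hd ha
    have hcont : ContinuousOn (fun x => fpPoly ρ d a (L:ℝ) x) (Set.Icc 0 (d / a)) := by
      apply Continuous.continuousOn
      unfold fpPoly
      fun_prop
    have h0 : fpPoly ρ d a (L:ℝ) 0 = -(d * ρ) := by unfold fpPoly; ring
    have hM : 0 < fpPoly ρ d a (L:ℝ) (d / a) := by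
      have hda2 : a * (d / a) = d := by field_simp
      unfold fpPoly
      nlinarith [mul_pos hda (mul_pos hda hda), mul_pos hd hρ, mul_pos hda hda,
        mul_pos (mul_pos hd hρ) hda, mul_pos (mul_pos (mul_pos hd hρ) hda) hda]
    have hsub := intermediate_value_Ioo hda.le hcont
    have h0mem : (0:ℝ) ∈ Set.Ioo (fpPoly ρ d a (L:ℝ) 0) (fpPoly ρ d a (L:ℝ) (d / a)) := by
      rw [h0]
      exact ⟨by nlinarith, hM⟩
    obtain ⟨x, hxm, hfx⟩ := hsub h0mem
    exact ⟨x, hxm, hfx⟩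
  have hx₀pos : 0 < x₀ := hx₀mem.1
  have hy₀pos : 0 < ρ * ((L:ℝ) - 1) / (L:ℝ) + x₀ / d := by
    have h1 : 0 < ρ * ((L:ℝ) - 1) := mul_pos hρ (by linarith)
    exact add_pos (div_pos h1 hK) (div_pos hx₀pos hd)
  refine ⟨⟨x₀, ρ * ((L:ℝ) - 1) / (L:ℝ) + x₀ / d⟩, ⟨⟨hx₀pos, hy₀pos⟩, ?_⟩, ?_⟩
  · exact (fp_equiv ρ d a (L:ℝ) hρ hd ha hK2 x₀ _ hx₀pos hy₀pos).mpr ⟨hx₀, rfl⟩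
  · rintro ⟨u, v⟩ ⟨⟨hu, hv⟩, h1, h2⟩
    obtain ⟨hpu, hveq⟩ := (fp_equiv ρ d a (L:ℝ) hρ hd ha hK2 u v hu hv).mp ⟨h1, h2⟩
    have hux : u = x₀ := by
      apply hmono.injOn (Set.mem_Ici.mpr hu.le) (Set.mem_Ici.mpr hx₀pos.le)
      simp only
      rw [hpu, hx₀]
    refine Prod.ext hux ?_
    simp only
    rw [hveq, hux]
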